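/- The operator S restricts to an automorphism of the space of locally analytic functions ℤₚ → ℂₚ: if g is locally analytic, then the unique continuous f with f(x) − x·f(x−1) = g(x) is also locally analytic. -/

import Mathlib

open Filter Finset

/-- The canonical embedding `ℤ_[p] → K` (where `K` plays the role of `ℂ_p`,
a complete nontrivially normed field extension of `ℚ_[p]`). -/
noncomputable def pc (p : ℕ) [Fact p.Prime] (K : Type*) [NontriviallyNormedField K]
    [NormedAlgebra ℚ_[p] K] (x : ℤ_[p]) : K :=
  algebraMap ℚ_[p] K x

/-- The operator `S` : `S(f)(x) = f(x) - x·f(x-1)`. -/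
noncomputable def Sop (p : ℕ) [Fact p.Prime] (K : Type*) [NontriviallyNormedField K]
    [NormedAlgebra ℚ_[p] K] (f : ℤ_[p] → K) : ℤ_[p] → K :=
  fun x => f x - pc p K x * f (x - 1)

/-- The Mahler basis function `βₙ(x) = C(x,n) = x(x-1)⋯(x-n+1)/n!`, valued in `K`. -/
noncomputable def bK (p : ℕ) [Fact p.Prime] (K : Type*) [NontriviallyNormedField K]
    [NormedAlgebra ℚ_[p] K] (n : ℕ) (x : ℤ_[p]) : K :=
  (∏ i ∈ Finset.range n, (pc p K x - (i : K))) / (n.factorial : K)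

-- The `p`-adic valuation on `K`, normalized so that `v p = 1`, with `v 0 = ⊤`.
open scoped Classical in
noncomputable def vK (p : ℕ) [Fact p.Prime] (K : Type*) [NontriviallyNormedField K]
    [NormedAlgebra ℚ_[p] K] (x : K) : EReal :=
  if x = 0 then ⊤ else ((- Real.logb p ‖x‖ : ℝ) : EReal)


section Helpers

section Aux
variable (p : ℕ) [Fact p.Prime] (K : Type*) [NontriviallyNormedField K] [NormedAlgebra ℚ_[p] K]

lemma pc_natCast (j : ℕ) : pc p K (j : ℤ_[p]) = (j : K) := by
  simp [pc]

lemma pc_zero : pc p K 0 = 0 := by simp [pc]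

lemma prod_desc (j k : ℕ) : ∏ i ∈ Finset.range k, ((j : K) - (i : K)) = (j.descFactorial k : K) := by
  induction k with
  | zero => simp
  | succ k ih =>
    rw [Finset.prod_range_succ, ih, Nat.descFactorial_succ]
    rcases le_or_gt (k+1) j with h | h
    · have : ((j - k : ℕ) : K) = (j : K) - (k : K) := by
        have : k ≤ j := by omega
        push_cast [this]; ring
      rw [Nat.cast_mul, this]; ring
    · have h2 : j - k = 0 := Nat.sub_eq_zero_of_le (by omega)
      rcases eq_or_lt_of_le (Nat.lt_succ_iff.mp h) with rfl | hlt
      · simp [h2]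
      · simp [Nat.descFactorial_eq_zero_iff_lt.2 hlt, h2]

lemma bK_natCast (k j : ℕ) : bK p K k (j : ℤ_[p]) = (j.choose k : K) := by
  haveI : CharZero K := charZero_of_injective_algebraMap (algebraMap ℚ_[p] K).injective
  rw [bK, pc_natCast, prod_desc, Nat.descFactorial_eq_factorial_mul_choose]
  rw [Nat.cast_mul]
  exact mul_div_cancel_left₀ _ (by exact_mod_cast k.factorial_ne_zero)

lemma tsum_eval (c : ℕ → K) (j : ℕ) :
    ∑' n : ℕ, c n * bK p K n (j : ℤ_[p]) = ∑ k ∈ Finset.range (j+1), c k * (j.choose k : K) := by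
  rw [tsum_eq_sum (s := Finset.range (j+1)) (fun k hk => by
    rw [bK_natCast, Nat.choose_eq_zero_of_lt (by simpa using hk), Nat.cast_zero, mul_zero])]
  exact Finset.sum_congr rfl fun k _ => by rw [bK_natCast]

lemma coeff_unique (c : ℕ → K) (h : ∀ j : ℕ, ∑ k ∈ Finset.range (j+1), c k * (j.choose k : K) = 0) :
    ∀ n, c n = 0 := by
  intro n
  induction n using Nat.strong_induction_on with
  | _ n ih =>
    have h0 := h n
    rw [Finset.sum_range_succ] at h0
    have hz : ∀ k ∈ Finset.range n, c k * (n.choose k : K) = 0 := fun k hk => by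
      rw [ih k (Finset.mem_range.mp hk), zero_mul]
    rwa [Finset.sum_eq_zero hz, zero_add, Nat.choose_self, Nat.cast_one, mul_one] at h0



lemma recurA (g : ℤ_[p] → K) (b : ℕ → K) (hgm : ∀ x, g x = ∑' n : ℕ, b n * bK p K n x)
    (f : ℤ_[p] → K) (hSf : Sop p K f = g) (a : ℕ → K)
    (hfm : ∀ x, f x = ∑' n : ℕ, a n * bK p K n x) :
    a 0 = b 0 ∧ ∀ n : ℕ, a (n+1) = b (n+1) + ((n+1 : ℕ) : K) * a n := by
  set c : ℕ → K := fun k => match k with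
    | 0 => a 0 - b 0
    | (k+1) => a (k+1) - b (k+1) - ((k+1 : ℕ) : K) * a k with hc
  have key : ∀ j : ℕ, ∑ k ∈ Finset.range (j+1), c k * (j.choose k : K) = 0 := by
    intro j
    match j with
    | 0 =>
      have h0 := congrFun hSf ((0 : ℕ) : ℤ_[p])
      simp only [Sop, pc_natCast, Nat.cast_zero, pc_zero, zero_mul, sub_zero] at h0
      have ha0 := tsum_eval p K a 0
      have hb0 := tsum_eval p K b 0
      simp only [Nat.cast_zero] at ha0 hb0
      rw [hfm, hgm, ha0, hb0] at h0
      simpa [c, sub_eq_zero] using h0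
    | (m+1) =>
      have hx : (((m+1:ℕ) : ℤ_[p])) - 1 = ((m : ℕ) : ℤ_[p]) := by push_cast; ring
      have h0 := congrFun hSf (((m+1:ℕ)) : ℤ_[p])
      simp only [Sop] at h0
      rw [hx, pc_natCast, hfm, hfm, hgm, tsum_eval, tsum_eval, tsum_eval] at h0
      -- h0 : ∑_{k∈range(m+2)} a k * C(m+1,k) - (m+1) * ∑_{k∈range(m+1)} a k * C(m,k)
      --      = ∑_{k∈range(m+2)} b k * C(m+1,k)
      rw [Finset.sum_range_succ' (fun k => c k * (((m+1).choose k : ℕ) : K)) (m+1)]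
      have e1 : ∀ k ∈ Finset.range (m+1),
          c (k+1) * (((m+1).choose (k+1) : ℕ) : K)
          = (a (k+1) * ((m+1).choose (k+1) : K) - b (k+1) * ((m+1).choose (k+1) : K))
            - ((m+1:ℕ) : K) * (a k * (m.choose k : K)) := by
        intro k _
        have hnat : ((m+1) * Nat.choose m k : ℕ) = (Nat.choose (m+1) (k+1) * (k+1) : ℕ) :=
          Nat.add_one_mul_choose_eq m k
        have hcast : ((m+1:ℕ) : K) * (m.choose k : K)
            = ((m+1).choose (k+1) : K) * ((k+1:ℕ) : K) := by exact_mod_cast congrArg _ hnat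
        show (a (k+1) - b (k+1) - ((k+1 : ℕ) : K) * a k) * _ = _
        linear_combination a k * hcast
      rw [Finset.sum_congr rfl e1, Finset.sum_sub_distrib, Finset.sum_sub_distrib,
        ← Finset.mul_sum]
      have hsplitA := Finset.sum_range_succ' (fun k => a k * (((m+1).choose k : ℕ) : K)) (m+1)
      have hsplitB := Finset.sum_range_succ' (fun k => b k * (((m+1).choose k : ℕ) : K)) (m+1)
      simp only [Nat.choose_zero_right, Nat.cast_one, mul_one] at hsplitA hsplitB
      have hc0 : c 0 * (((m+1).choose 0 : ℕ) : K) = a 0 - b 0 := by simp [c]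
      rw [hc0]
      linear_combination h0 - hsplitA + hsplitB
  have hz := coeff_unique K c key
  constructor
  · have := hz 0; simpa [c] using sub_eq_zero.mp this
  · intro n
    have := hz (n+1)
    have : a (n+1) - b (n+1) - ((n+1 : ℕ) : K) * a n = 0 := this
    linear_combination this
end Aux

def Dc (n k : ℕ) : ℕ := (n - k).factorial * n.choose k

lemma Dc_mul_fact {n k : ℕ} (h : k ≤ n) : Dc n k * k.factorial = n.factorial := by
  unfold Dc
  calc (n - k).factorial * n.choose k * k.factorial
      = n.choose k * k.factorial * (n - k).factorial := by ring
    _ = n.factorial := Nat.choose_mul_factorial_mul_factorial h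

lemma Dc_succ {n k : ℕ} (h : k ≤ n) : Dc (n+1) k = (n+1) * Dc n k := by
  apply Nat.eq_of_mul_eq_mul_right (Nat.factorial_pos k)
  rw [Dc_mul_fact (h.trans n.le_succ), Nat.factorial_succ, mul_assoc, Dc_mul_fact h]

lemma Dc_self (n : ℕ) : Dc n n = 1 := by simp [Dc]

lemma Dc_dvd (n k : ℕ) (p : ℕ) (hp : p.Prime) : p ^ ((n - k) / p) ∣ Dc n k :=
  Dvd.dvd.mul_right (by
    set m := n - k
    rcases lt_or_ge m p with h | h
    · simp [Nat.div_eq_of_lt h]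
    · rw [Nat.Prime.pow_dvd_factorial_iff hp (Nat.lt_succ_self _)]
      exact Finset.single_le_sum (f := fun i => m / p ^ i) (fun i _ => Nat.zero_le _)
        (Finset.mem_Ico.mpr ⟨le_refl 1, by
          have := Nat.log_pos hp.one_lt h; omega⟩) |>.trans_eq' (by rw [pow_one])) _

section CF
variable {K : Type*} [Field K]

lemma closed_form (a b : ℕ → K) (h0 : a 0 = b 0)
    (hrec : ∀ n : ℕ, a (n+1) = b (n+1) + ((n+1 : ℕ) : K) * a n) :
    ∀ n, a n = ∑ k ∈ Finset.range (n+1), (Dc n k : K) * b k := by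
  intro n
  induction n with
  | zero => simpa [Dc] using h0
  | succ n ih =>
    rw [hrec, ih, Finset.sum_range_succ (f := fun k => ((Dc (n+1) k : ℕ) : K) * b k), Dc_self, Nat.cast_one, one_mul, Finset.mul_sum,
      add_comm]
    congr 1
    refine Finset.sum_congr rfl fun k hk => ?_
    rw [Dc_succ (Nat.lt_succ_iff.mp (Finset.mem_range.mp hk)), Nat.cast_mul, mul_assoc]
end CF

section Norms
variable (p : ℕ) [Fact p.Prime] (K : Type*) [NontriviallyNormedField K] [NormedAlgebra ℚ_[p] K]

lemma ultraK (p : ℕ) [Fact p.Prime] (K : Type*) [NontriviallyNormedField K]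
    [NormedAlgebra ℚ_[p] K] : IsUltrametricDist K :=
  IsUltrametricDist.of_normedAlgebra ℚ_[p] (L := K)

lemma norm_p_K : ‖((p : ℕ) : K)‖ = (p : ℝ)⁻¹ := by
  have h : ((p : ℕ) : K) = algebraMap ℚ_[p] K ((p : ℕ) : ℚ_[p]) := by rw [map_natCast]
  rw [h, norm_algebraMap', Padic.norm_p]

lemma norm_Dc_le (n k : ℕ) :
    ‖((Dc n k : ℕ) : K)‖ ≤ (p : ℝ) ^ (-((((n - k) / p : ℕ) : ℝ))) := by
  haveI := ultraK p K
  have hp : p.Prime := Fact.out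
  have hp0 : (0:ℝ) < p := by exact_mod_cast hp.pos
  obtain ⟨m, hm⟩ := Dc_dvd n k p hp
  rw [hm, Nat.cast_mul, norm_mul, Nat.cast_pow, norm_pow, norm_p_K]
  calc ((p:ℝ)⁻¹) ^ ((n - k) / p) * ‖(m : K)‖ ≤ ((p:ℝ)⁻¹) ^ ((n - k) / p) * 1 := by
        apply mul_le_mul_of_nonneg_left (IsUltrametricDist.norm_natCast_le_one K m)
        positivity
    _ = (p : ℝ) ^ (-((((n - k) / p : ℕ) : ℝ))) := by
        rw [mul_one, Real.rpow_neg hp0.le, Real.rpow_natCast, inv_pow]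
end Norms

end Helpers

set_option linter.unusedVariables false in
/-- `S` restricts to an automorphism of locally analytic functions:
if `g` is locally analytic (Amice's criterion `liminf vₚ(bₙ)/n > 0` on its Mahler
coefficients), and `f` is the unique continuous function with `S f = g`, with
Mahler coefficients `(aₙ)`, then `f` is locally analytic. -/
theorem stmt_7 (p : ℕ) [Fact p.Prime] (K : Type*) [NontriviallyNormedField K]
    [NormedAlgebra ℚ_[p] K] [CompleteSpace K]
    (g : ℤ_[p] → K) (hg : Continuous g) (b : ℕ → K)
    (hb : Tendsto b atTop (nhds 0))
    (hgm : ∀ x, g x = ∑' n : ℕ, b n * bK p K n x)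
    (hgla : 0 < Filter.liminf (fun n : ℕ => vK p K (b n) / ((n : ℝ) : EReal)) Filter.atTop)
    (f : ℤ_[p] → K) (hf : Continuous f) (hSf : Sop p K f = g)
    (a : ℕ → K) (ha : Tendsto a atTop (nhds 0))
    (hfm : ∀ x, f x = ∑' n : ℕ, a n * bK p K n x) :
    0 < Filter.liminf (fun n : ℕ => vK p K (a n) / ((n : ℝ) : EReal)) Filter.atTop := by
  haveI := ultraK p K
  have hp : p.Prime := Fact.out
  have hp1 : (1:ℝ) < p := by exact_mod_cast hp.one_lt
  have hp0 : (0:ℝ) < p := lt_trans one_pos hp1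
  obtain ⟨h0, hrec⟩ := recurA p K g b hgm f hSf a hfm
  have hcf := closed_form a b h0 hrec
  -- extract a real constant c below the liminf
  obtain ⟨c, hc0, hc2⟩ := EReal.exists_between_coe_real hgla
  have hc1 : (0:ℝ) < c := by exact_mod_cast hc0
  have hev := eventually_lt_of_lt_liminf hc2
  obtain ⟨N0, hN0⟩ := eventually_atTop.mp (hev.and (eventually_ge_atTop 1))
  -- norm bound for b n, n ≥ N0
  have hbn : ∀ n, N0 ≤ n → ‖b n‖ ≤ (p:ℝ) ^ (-(c * n)) := by
    intro n hn
    obtain ⟨hlt, hn1⟩ := hN0 n hn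
    by_cases hz : b n = 0
    · rw [hz, norm_zero]; positivity
    · rw [vK, if_neg hz, ← EReal.coe_div] at hlt
      have hlt' : c < (- Real.logb p ‖b n‖) / n := EReal.coe_lt_coe_iff.mp hlt
      have hnn : (0:ℝ) < n := by exact_mod_cast hn1
      rw [lt_div_iff₀ hnn] at hlt'
      have h3 : Real.logb p ‖b n‖ ≤ -(c * n) := by linarith [hlt']
      exact (Real.logb_le_iff_le_rpow hp1 (norm_pos_iff.mpr hz)).mp h3
  -- bound M for all of b
  obtain ⟨M0, hM0⟩ := (hb.norm.bddAbove_range)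
  set M : ℝ := max M0 1 with hM
  have hM1 : (1:ℝ) ≤ M := le_max_right _ _
  have hMb : ∀ k, ‖b k‖ ≤ M := fun k =>
    le_trans (hM0 (Set.mem_range_self k)) (le_max_left _ _)
  -- epsilon
  set ε : ℝ := min (c/2) (1/(4*p)) with hε
  have hε0 : 0 < ε := lt_min (by linarith) (by positivity)
  have hεc : ε ≤ c/2 := min_le_left _ _
  have hεp : ε ≤ 1/(4*p) := min_le_right _ _
  -- eventual bound for the M-term
  have hMev : ∀ᶠ n : ℕ in atTop, M ≤ (p:ℝ) ^ ((n:ℝ)/(4*p) - 1) := by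
    have h1 : Tendsto (fun n : ℕ => (n:ℝ)/(4*p) - 1) atTop atTop := by
      apply tendsto_atTop_add_const_right
      exact (tendsto_natCast_atTop_atTop).atTop_div_const (by positivity)
    have h2 : Tendsto (fun x : ℝ => (p:ℝ) ^ x) atTop atTop := by
      simp_rw [Real.rpow_def_of_pos hp0]
      exact Real.tendsto_exp_atTop.comp (Tendsto.const_mul_atTop (Real.log_pos hp1) tendsto_id)
    exact (h2.comp h1).eventually_ge_atTop M
  -- the key eventual bound
  have hkey : ∀ᶠ n : ℕ in atTop, (ε : EReal) ≤ vK p K (a n) / ((n : ℝ) : EReal) := by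
    filter_upwards [hMev, eventually_ge_atTop (2*N0), eventually_ge_atTop 1]
      with n hMn h2N hn1
    have hna : ‖a n‖ ≤ (p:ℝ) ^ (-(ε * n)) := by
      rw [hcf n]
      apply IsUltrametricDist.norm_sum_le_of_forall_le_of_nonneg (by positivity)
      intro k hk
      have hkn : k ≤ n := Nat.lt_succ_iff.mp (Finset.mem_range.mp hk)
      rw [norm_mul]
      rcases le_or_gt n (2*k) with hcase | hcase
      · have hkN : N0 ≤ k := by omega
        have h1 : ‖((Dc n k : ℕ) : K)‖ ≤ 1 := IsUltrametricDist.norm_natCast_le_one K _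
        calc ‖((Dc n k : ℕ) : K)‖ * ‖b k‖ ≤ 1 * ((p:ℝ)^(-(c*k))) :=
              mul_le_mul h1 (hbn k hkN) (norm_nonneg _) zero_le_one
          _ = (p:ℝ)^(-(c*(k:ℝ))) := one_mul _
          _ ≤ (p:ℝ)^(-(ε*(n:ℝ))) := by
              apply Real.rpow_le_rpow_of_exponent_le hp1.le
              have hcase' : (n:ℝ) ≤ 2*k := by exact_mod_cast hcase
              nlinarith
      · have hD := norm_Dc_le p K n k
        have e2 : ((n:ℝ) - k) / 2 ≤ ((n - k : ℕ) : ℝ) := by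
          have : ((n - k : ℕ) : ℝ) = (n:ℝ) - k := by
            push_cast [hkn]; ring
          rw [this]
          have : (2*k:ℝ) ≤ n := by exact_mod_cast hcase.le
          linarith
        have e3 : (n:ℝ)/(2*p) - 1 ≤ ((((n - k) / p : ℕ)) : ℝ) := by
          have hdm := Nat.div_add_mod (n - k) p
          have hml : (n - k) % p < p := Nat.mod_lt _ hp.pos
          have hdm' : (p:ℝ) * (((n-k)/p : ℕ):ℝ) + (((n-k)%p : ℕ):ℝ) = ((n-k:ℕ):ℝ) := by
            exact_mod_cast congrArg (Nat.cast : ℕ → ℝ) hdm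
          have hml' : (((n-k)%p : ℕ):ℝ) < p := by exact_mod_cast hml
          have hk2 : (2*(k:ℝ)) ≤ n := by exact_mod_cast hcase.le
          have e4 : (n:ℝ) - k ≥ (n:ℝ)/2 := by linarith
          have e5 : ((n-k:ℕ):ℝ) ≥ (n:ℝ)/2 := by
            have : ((n - k : ℕ) : ℝ) = (n:ℝ) - k := by push_cast [hkn]; ring
            linarith [this]
          rw [div_sub' (by positivity), div_le_iff₀ (by positivity)]
          nlinarith
        calc ‖((Dc n k : ℕ) : K)‖ * ‖b k‖
            ≤ (p:ℝ) ^ (-((((n - k) / p : ℕ) : ℝ))) * M :=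
              mul_le_mul hD (hMb k) (norm_nonneg _) (by positivity)
          _ ≤ (p:ℝ) ^ (1 - (n:ℝ)/(2*p)) * ((p:ℝ) ^ ((n:ℝ)/(4*p) - 1)) := by
              apply mul_le_mul _ hMn (by linarith) (by positivity)
              apply Real.rpow_le_rpow_of_exponent_le hp1.le
              linarith
          _ = (p:ℝ) ^ (1 - (n:ℝ)/(2*p) + ((n:ℝ)/(4*p) - 1)) := by
              rw [← Real.rpow_add hp0]
          _ ≤ (p:ℝ)^(-(ε*(n:ℝ))) := by
              apply Real.rpow_le_rpow_of_exponent_le hp1.le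
              have h5 : ε * n ≤ 1/(4*p) * n := by
                apply mul_le_mul_of_nonneg_right hεp (by positivity)
              have h6 : 1 - (n:ℝ)/(2*p) + ((n:ℝ)/(4*p) - 1) = -((n:ℝ)/(4*p)) := by
                field_simp; ring
              rw [h6]
              have : (1/(4*p)) * (n:ℝ) = (n:ℝ)/(4*p) := by ring
              linarith [h5, this]
    -- convert to EReal
    by_cases hz : a n = 0
    · rw [vK, if_pos hz, EReal.top_div_of_pos_ne_top _ (EReal.coe_ne_top _)]
      · exact le_top
      · exact_mod_cast (by exact_mod_cast hn1 : (0:ℝ) < n)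
    · rw [vK, if_neg hz, ← EReal.coe_div]
      rw [EReal.coe_le_coe_iff]
      have hnn : (0:ℝ) < n := by exact_mod_cast hn1
      rw [le_div_iff₀ hnn]
      have h3 : Real.logb p ‖a n‖ ≤ -(ε * n) :=
        (Real.logb_le_iff_le_rpow hp1 (norm_pos_iff.mpr hz)).mpr hna
      linarith
  -- conclude
  have hle : (ε : EReal) ≤ Filter.liminf (fun n : ℕ => vK p K (a n) / ((n : ℝ) : EReal)) atTop :=
    le_liminf_of_le (by isBoundedDefault) hkey
  exact lt_of_lt_of_le (by exact_mod_cast hε0) hle
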